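/- Let G be a connected, locally finite simple graph on a vertex type V, and let ξ ⊆ V be an infinite set whose induced subgraph in G is connected. Then there exist an end e of G and a function U assigning to every finite set K ⊆ V a set U(K) ⊆ V such that for every finite K ⊆ V: (i) U(K) is contained both in the vertex set of the component e(K) and in ξ; (ii) U(K) is infinite; (iii) the subgraph of G induced on U(K) is connected; and (iv) U(K) ⊆ U(K₀) whenever K₀ ⊆ K. -/

import Mathlib

open Opposite

namespace StmtAux

open SimpleGraph

variable {W : Type*}

lemma aux_reach (H : SimpleGraph W) {S T : Set W} (hST : S ⊆ T)
    (hc : (H.induce S).Connected) {x y : W} (hx : x ∈ S) (hy : y ∈ S) :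
    (H.induce T).Reachable ⟨x, hST hx⟩ ⟨y, hST hy⟩ :=
  (hc.preconnected ⟨x, hx⟩ ⟨y, hy⟩).map (H.induceHomOfLE hST).toHom

lemma supp_connected' (H : SimpleGraph W) (C : H.ConnectedComponent) :
    (H.induce C.supp).Connected := by
  classical
  obtain ⟨w, hw⟩ := C.exists_rep
  rw [SimpleGraph.connected_iff]
  refine ⟨?_, ⟨⟨w, hw⟩⟩⟩
  rintro ⟨a, ha⟩ ⟨b, hb⟩
  have ha' : H.connectedComponentMk a = C := ha
  have hb' : H.connectedComponentMk b = C := hb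
  obtain ⟨p⟩ := ConnectedComponent.exact (ha'.trans hb'.symm)
  have hsub : {u | u ∈ p.support} ⊆ C.supp := by
    intro u hu
    exact (ConnectedComponent.sound ((p.takeUntil u hu).reachable).symm).trans ha'
  exact aux_reach H hsub p.connected_induce_support p.start_mem_support p.end_mem_support

/-- The canonical isomorphism between an induced subgraph of an induced subgraph and the
corresponding induced subgraph on the image. -/
noncomputable def induceInduceIso (H : SimpleGraph W) (s : Set W) (t : Set s) :
    (H.induce s).induce t ≃g H.induce (Subtype.val '' t) where
  toEquiv := Equiv.Set.image Subtype.val t Subtype.val_injective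
  map_rel_iff' := Iff.rfl

lemma image_supp_connected (H : SimpleGraph W) (s : Set W)
    (C : (H.induce s).ConnectedComponent) :
    (H.induce (Subtype.val '' C.supp)).Connected :=
  (induceInduceIso H s C.supp).connected_iff.mp (supp_connected' _ C)

lemma componentCompl_supp_eq (H : SimpleGraph W) (K : Set W) (C : H.ComponentCompl K) :
    C.supp = Subtype.val '' (ConnectedComponent.supp C) := by
  ext v
  constructor
  · rintro ⟨h, hmk⟩
    exact ⟨⟨v, h⟩, hmk, rfl⟩
  · rintro ⟨⟨v, h⟩, hw, rfl⟩
    exact ⟨h, hw⟩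

end StmtAux

open StmtAux SimpleGraph

theorem stmt_2 {V : Type*} (G : SimpleGraph V) (hconn : G.Connected)
    (hlf : G.LocallyFinite) (ξ : Set V) (hξ : ξ.Infinite)
    (hξconn : (G.induce ξ).Connected) :
    ∃ (e : G.end) (U : Finset V → Set V),
      ∀ K : Finset V,
        U K ⊆ (e.val (op K)).supp ∧
        U K ⊆ ξ ∧
        (U K).Infinite ∧
        (G.induce (U K)).Connected ∧
        ∀ K₀ : Finset V, K₀ ⊆ K → U K ⊆ U K₀ := by
  classical
  haveI : Infinite ↥ξ := hξ.to_subtype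
  set G' := G.induce ξ with hG'
  haveI hlf' : G'.LocallyFinite := by
    intro v
    haveI : Fintype (G.neighborSet v.1) := hlf v.1
    have hinj : Function.Injective
        (fun w : G'.neighborSet v => (⟨(w.1 : V), w.2⟩ : G.neighborSet v.1)) := by
      intro a b hab
      simp only [Subtype.mk.injEq] at hab
      exact Subtype.ext (Subtype.ext (by have h2 := congrArg Subtype.val hab; exact h2))
    haveI : Finite (G'.neighborSet v) := Finite.of_injective _ hinj
    exact Fintype.ofFinite _
  haveI : Fact G'.Preconnected := ⟨hξconn.preconnected⟩
  haveI f1 : ∀ K : (Finset ↥ξ)ᵒᵖ, Finite (G'.componentComplFunctor.obj K) :=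
    fun K => G'.componentCompl_finite K.unop
  haveI f2 : ∀ K : (Finset ↥ξ)ᵒᵖ, Nonempty (G'.componentComplFunctor.obj K) :=
    fun K => G'.componentCompl_nonempty_of_infinite K.unop
  obtain ⟨e', he'⟩ := nonempty_sections_of_finite_inverse_system G'.componentComplFunctor
  set K' : Finset V → Finset ↥ξ :=
    fun K => K.preimage Subtype.val Subtype.val_injective.injOn with hK'
  set Cc : (K : Finset V) → G'.ComponentCompl ((K' K : Set ↥ξ)) :=
    fun K => e' (op (K' K)) with hCc
  set U : Finset V → Set V := fun K => Subtype.val '' (Cc K).supp with hU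
  -- members of `U K` avoid `K`
  have hUK : ∀ (K : Finset V) (u : V), u ∈ U K → u ∉ K := by
    rintro K u ⟨w, hw, rfl⟩ huK
    exact hw.1 (Finset.mem_preimage.mpr huK)
  have hUKc : ∀ K : Finset V, U K ⊆ ((K : Set V))ᶜ := fun K u hu => hUK K u hu
  -- nesting
  have hU_mono : ∀ (K₀ K : Finset V), K₀ ⊆ K → U K ⊆ U K₀ := by
    intro K₀ K h
    have h' : K' K₀ ⊆ K' K := Finset.monotone_preimage Subtype.val_injective h
    have h'' : ((K' K₀ : Finset ↥ξ) : Set ↥ξ) ⊆ ((K' K : Finset ↥ξ) : Set ↥ξ) := by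
      exact_mod_cast h'
    have hhom : (Cc K).hom h'' = Cc K₀ := he' (CategoryTheory.opHomOfLE h')
    have hsub : ((Cc K : Set ↥ξ)) ⊆ ((Cc K₀ : Set ↥ξ)) := by
      rw [← hhom]
      exact ComponentCompl.subset_hom _ _
    exact Set.image_mono hsub
  -- connectivity
  have hUconn : ∀ K : Finset V, (G.induce (U K)).Connected := by
    intro K
    have h1 : (G'.induce ((Cc K).supp)).Connected := by
      rw [componentCompl_supp_eq]
      exact image_supp_connected G' _ _
    exact (induceInduceIso G ξ ((Cc K).supp)).connected_iff.mp h1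
  -- infinitude
  have hUinf : ∀ K : Finset V, (U K).Infinite := by
    intro K
    have hsupp : ((Cc K).supp).Infinite := by
      refine (Cc K).infinite_iff_in_all_ranges.mpr fun L h => ?_
      exact ⟨e' (op L), he' (CategoryTheory.opHomOfLE h)⟩
    exact hsupp.image Subtype.val_injective.injOn
  -- nonemptiness and chosen basepoints
  have hUne : ∀ K : Finset V, (U K).Nonempty := fun K => ((Cc K).nonempty).image _
  choose v₀ hv₀ using hUne
  have hv₀K : ∀ K : Finset V, v₀ K ∉ K := fun K => hUK K _ (hv₀ K)
  -- all points of `U K` lie in the same component of the complement of `K`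
  have hreach : ∀ (K : Finset V) (x y : V) (hx : x ∈ U K) (hy : y ∈ U K),
      G.componentComplMk (hUK K x hx) = G.componentComplMk (hUK K y hy) := by
    intro K x y hx hy
    exact ConnectedComponent.sound (aux_reach G (hUKc K) (hUconn K) hx hy)
  refine ⟨⟨fun K => G.componentComplMk (hv₀K K.unop), ?_⟩, U, ?_⟩
  · intro K L f
    have hLK : L.unop ⊆ K.unop := CategoryTheory.le_of_op_hom f
    have hx : v₀ K.unop ∈ U L.unop := hU_mono L.unop K.unop hLK (hv₀ K.unop)
    exact hreach L.unop _ _ hx (hv₀ L.unop)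
  · intro K
    refine ⟨?_, ?_, hUinf K, hUconn K, fun K₀ h => hU_mono K₀ K h⟩
    · intro u hu
      exact ⟨hUK K u hu, hreach K u (v₀ K) hu (hv₀ K)⟩
    · rintro u ⟨w, _, rfl⟩
      exact w.2
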